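/- Let G be a connected simple graph on n ≥ 3 vertices with Randić index R, algebraic connectivity a, and minimum degree δ. Then R·a ≥ nδ(2δ - n + 2)/(2(n-1)). -/

import Mathlib

open Finset Real Matrix

/-- The Randić index of a finite simple graph:
`R(G) = ∑_{uv ∈ E(G)} 1/√(d(u)·d(v))`. -/
noncomputable def randicIndex {V : Type*} [Fintype V] (G : SimpleGraph V) : ℝ :=
  letI : DecidableRel G.Adj := Classical.decRel _
  ∑ e ∈ G.edgeFinset,
    Sym2.lift ⟨fun u v => 1 / Real.sqrt ((G.degree u : ℝ) * (G.degree v : ℝ)),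
      fun u v => by simp [mul_comm]⟩ e

/-- The algebraic connectivity of a graph on `Fin n`: the second smallest eigenvalue
of the Laplacian matrix, characterized (via Courant–Fischer, since the all-ones vector
is an eigenvector of the smallest eigenvalue `0`) as the infimum of the Rayleigh
quotient over nonzero vectors orthogonal to the all-ones vector. -/
noncomputable def algebraicConnectivity {n : ℕ} (G : SimpleGraph (Fin n)) : ℝ :=
  letI : DecidableRel G.Adj := Classical.decRel _
  sInf {r : ℝ | ∃ x : Fin n → ℝ, x ≠ 0 ∧ (∑ i, x i) = 0 ∧
    r = (x ⬝ᵥ ((G.lapMatrix ℝ).mulVec x)) / (x ⬝ᵥ x)}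

/-- The edge connectivity of a graph: the least number of edges whose deletion
disconnects the graph. -/
noncomputable def edgeConnectivity {V : Type*} [Fintype V] (G : SimpleGraph V) : ℕ :=
  sInf {k : ℕ | ∃ s : Set (Sym2 V), s ⊆ G.edgeSet ∧ s.ncard = k ∧
    ¬ (G.deleteEdges s).Connected}

/-- The star `K_{1,n-1}` on vertex set `Fin n`: vertex `0` is adjacent to all others. -/
def starGraph (n : ℕ) : SimpleGraph (Fin n) where
  Adj i j := i ≠ j ∧ ((i : ℕ) = 0 ∨ (j : ℕ) = 0)
  symm := ⟨fun _ _ h => ⟨h.1.symm, h.2.symm⟩⟩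
  loopless := ⟨fun _ h => h.1 rfl⟩

section Aux

variable {n : ℕ}

private lemma sum_sq_pairs (x : Fin n → ℝ) (hs : ∑ i, x i = 0) :
    ∑ i, ∑ j, (x i - x j)^2 = 2*(n:ℝ)*(∑ i, (x i)^2) := by
  have h1 : ∀ i : Fin n, ∑ j, (x i - x j)^2
      = (n:ℝ)*(x i)^2 - 2*(x i)*(∑ j, x j) + ∑ j, (x j)^2 := by
    intro i
    have e : ∀ j : Fin n, (x i - x j)^2 = (x i)^2 - 2*(x i)*(x j) + (x j)^2 := by
      intro j; ring
    simp_rw [e, Finset.sum_add_distrib, Finset.sum_sub_distrib, Finset.sum_const,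
      Finset.card_univ, Fintype.card_fin, nsmul_eq_mul, Finset.mul_sum]
  simp_rw [h1, hs]
  rw [Finset.sum_add_distrib, Finset.sum_sub_distrib, ← Finset.mul_sum, Finset.sum_const,
    Finset.card_univ, Fintype.card_fin, nsmul_eq_mul]
  simp
  ring

private lemma quad_lb (hn : 3 ≤ n) (G : SimpleGraph (Fin n)) [inst : DecidableRel G.Adj]
    (x : Fin n → ℝ) (hs : ∑ i, x i = 0) :
    (2*(G.minDegree : ℝ) - n + 2) * (∑ i, (x i)^2) ≤ x ⬝ᵥ ((G.lapMatrix ℝ).mulVec x) := by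
  classical
  have hQ : x ⬝ᵥ ((G.lapMatrix ℝ).mulVec x)
      = (∑ i, ∑ j, if G.Adj i j then (x i - x j)^2 else 0)/2 := by
    rw [← Matrix.toLinearMap₂'_apply', SimpleGraph.lapMatrix_toLinearMap₂']
  set S := ∑ i, (x i)^2 with hSdef
  have hS0 : 0 ≤ S := Finset.sum_nonneg fun i _ => sq_nonneg _
  set δ := G.minDegree with hδdef
  -- split total sum into adjacent / non-adjacent parts
  have hsplit : ∀ i j : Fin n, (x i - x j)^2 =
      (if G.Adj i j then (x i - x j)^2 else 0)
        + (if Gᶜ.Adj i j then (x i - x j)^2 else 0) := by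
    intro i j
    by_cases h : G.Adj i j
    · have : ¬ Gᶜ.Adj i j := by simp [SimpleGraph.compl_adj, h]
      simp [h, this]
    · by_cases h2 : i = j
      · subst h2; simp
      · have : Gᶜ.Adj i j := (SimpleGraph.compl_adj G i j).2 ⟨h2, h⟩
        simp [h, this]
  have hsum_split : ∑ i, ∑ j, (x i - x j)^2
      = (∑ i, ∑ j, if G.Adj i j then (x i - x j)^2 else 0)
        + (∑ i, ∑ j, if Gᶜ.Adj i j then (x i - x j)^2 else 0) := by
    rw [← Finset.sum_add_distrib]
    refine Finset.sum_congr rfl fun i _ => ?_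
    rw [← Finset.sum_add_distrib]
    exact Finset.sum_congr rfl fun j _ => hsplit i j
  -- degree facts
  have hdle : ∀ i : Fin n, ((Gᶜ.degree i : ℝ)) ≤ (n:ℝ) - 1 - δ := by
    intro i
    have h1 : Gᶜ.degree i = n - 1 - G.degree i := by
      rw [SimpleGraph.degree_compl, Fintype.card_fin]
    have h2 : G.degree i ≤ n - 1 := by
      have := G.degree_lt_card_verts i
      rw [Fintype.card_fin] at this; omega
    have h3 : δ ≤ G.degree i := G.minDegree_le_degree i
    have h4 : Gᶜ.degree i ≤ n - 1 - δ := by omega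
    have h5 : δ ≤ n - 1 := le_trans h3 h2
    calc ((Gᶜ.degree i : ℝ)) ≤ ((n - 1 - δ : ℕ) : ℝ) := by exact_mod_cast h4
      _ = (n:ℝ) - 1 - δ := by
          have h6 : (1:ℕ) ≤ n := by omega
          push_cast [Nat.cast_sub (by omega : δ ≤ n - 1), Nat.cast_sub h6]
          ring
  -- count: ∑_j [Gᶜ.Adj i j] c = degree * c
  have hcount : ∀ (i : Fin n) (c : ℝ), (∑ j, if Gᶜ.Adj i j then c else 0)
      = (Gᶜ.degree i : ℝ) * c := by
    intro i c
    rw [Finset.sum_ite, Finset.sum_const, Finset.sum_const_zero, add_zero,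
      nsmul_eq_mul]
    congr 2
    rw [SimpleGraph.degree, SimpleGraph.neighborFinset_eq_filter]
  -- bound the complement part
  have hcompl : (∑ i, ∑ j, if Gᶜ.Adj i j then (x i - x j)^2 else 0)
      ≤ 4*((n:ℝ) - 1 - δ) * S := by
    have step1 : (∑ i, ∑ j, if Gᶜ.Adj i j then (x i - x j)^2 else 0)
        ≤ ∑ i, ∑ j, if Gᶜ.Adj i j then 2*((x i)^2 + (x j)^2) else 0 := by
      refine Finset.sum_le_sum fun i _ => Finset.sum_le_sum fun j _ => ?_
      split_ifs
      · nlinarith [sq_nonneg (x i + x j)]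
      · exact le_refl 0
    have step2 : (∑ i, ∑ j, if Gᶜ.Adj i j then 2*((x i)^2 + (x j)^2) else 0)
        = 4 * ∑ i, (Gᶜ.degree i : ℝ) * (x i)^2 := by
      have e : ∀ i j : Fin n, (if Gᶜ.Adj i j then 2*((x i)^2 + (x j)^2) else 0)
          = (if Gᶜ.Adj i j then 2*(x i)^2 else 0) + (if Gᶜ.Adj i j then 2*(x j)^2 else 0) := by
        intro i j; split_ifs <;> ring
      simp_rw [e, Finset.sum_add_distrib]
      have eA : (∑ i, ∑ j, if Gᶜ.Adj i j then 2*(x i)^2 else 0)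
          = ∑ i, (Gᶜ.degree i : ℝ) * (2*(x i)^2) := by
        exact Finset.sum_congr rfl fun i _ => hcount i _
      have eB : (∑ i, ∑ j, if Gᶜ.Adj i j then 2*(x j)^2 else 0)
          = ∑ j, (Gᶜ.degree j : ℝ) * (2*(x j)^2) := by
        rw [Finset.sum_comm]
        refine Finset.sum_congr rfl fun j _ => ?_
        have : ∀ i : Fin n, (if Gᶜ.Adj i j then 2*(x j)^2 else 0)
            = (if Gᶜ.Adj j i then 2*(x j)^2 else 0) := by
          intro i; exact if_congr (Gᶜ.adj_comm i j) rfl rfl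
        simp_rw [this]
        exact hcount j _
      rw [eA, eB, ← Finset.sum_add_distrib, Finset.mul_sum]
      exact Finset.sum_congr rfl fun i _ => by ring
    have step3 : (∑ i, (Gᶜ.degree i : ℝ) * (x i)^2) ≤ ((n:ℝ) - 1 - δ) * S := by
      rw [hSdef, Finset.mul_sum]
      exact Finset.sum_le_sum fun i _ =>
        mul_le_mul_of_nonneg_right (hdle i) (sq_nonneg _)
    calc (∑ i, ∑ j, if Gᶜ.Adj i j then (x i - x j)^2 else 0)
        ≤ 4 * ∑ i, (Gᶜ.degree i : ℝ) * (x i)^2 := by rw [← step2]; exact step1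
      _ ≤ 4*((n:ℝ) - 1 - δ) * S := by rw [mul_assoc]; linarith
  have htot : ∑ i, ∑ j, (x i - x j)^2 = 2*(n:ℝ)*S := sum_sq_pairs x hs
  rw [hQ]
  have := hsum_split
  rw [htot] at this
  linarith
end Aux

section Aux2
variable {n : ℕ}

private lemma randic_lb (hn : 3 ≤ n) (G : SimpleGraph (Fin n)) :
    letI : DecidableRel G.Adj := Classical.decRel _
    (n:ℝ) * (G.minDegree : ℝ) / (2 * ((n:ℝ) - 1)) ≤ randicIndex G := by
  letI : DecidableRel G.Adj := Classical.decRel _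
  have hn3 : (3:ℝ) ≤ (n:ℝ) := by exact_mod_cast hn
  unfold randicIndex
  have hterm : ∀ e ∈ G.edgeFinset,
      1/((n:ℝ)-1) ≤ Sym2.lift ⟨fun u v => 1 / Real.sqrt ((G.degree u : ℝ) * (G.degree v : ℝ)),
        fun u v => by simp [mul_comm]⟩ e := by
    intro e he
    induction e with
    | h u v =>
      rw [SimpleGraph.mem_edgeFinset, SimpleGraph.mem_edgeSet] at he
      simp only [Sym2.lift_mk]
      have hdu : 1 ≤ G.degree u := by
        rw [Nat.one_le_iff_ne_zero, ← Nat.pos_iff_ne_zero, SimpleGraph.degree_pos_iff_exists_adj]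
        exact ⟨v, he⟩
      have hdv : 1 ≤ G.degree v := by
        rw [Nat.one_le_iff_ne_zero, ← Nat.pos_iff_ne_zero, SimpleGraph.degree_pos_iff_exists_adj]
        exact ⟨u, he.symm⟩
      have hu2 : (G.degree u : ℝ) ≤ (n:ℝ) - 1 := by
        have h := G.degree_lt_card_verts u
        rw [Fintype.card_fin] at h
        have h2 : G.degree u + 1 ≤ n := h
        have : ((G.degree u : ℝ)) + 1 ≤ (n:ℝ) := by exact_mod_cast h2
        linarith
      have hv2 : (G.degree v : ℝ) ≤ (n:ℝ) - 1 := by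
        have h := G.degree_lt_card_verts v
        rw [Fintype.card_fin] at h
        have h2 : G.degree v + 1 ≤ n := h
        have : ((G.degree v : ℝ)) + 1 ≤ (n:ℝ) := by exact_mod_cast h2
        linarith
      have hpos : (0:ℝ) < (G.degree u : ℝ) * (G.degree v : ℝ) := by
        have h1 : (0:ℝ) < (G.degree u : ℝ) := by exact_mod_cast hdu
        have h2 : (0:ℝ) < (G.degree v : ℝ) := by exact_mod_cast hdv
        positivity
      have hsq : Real.sqrt ((G.degree u : ℝ) * (G.degree v : ℝ)) ≤ (n:ℝ) - 1 := by
        rw [show (n:ℝ) - 1 = Real.sqrt (((n:ℝ)-1)^2) from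
          (Real.sqrt_sq (by linarith)).symm]
        apply Real.sqrt_le_sqrt
        nlinarith [Nat.cast_nonneg (α := ℝ) (G.degree u), Nat.cast_nonneg (α := ℝ) (G.degree v)]
      exact one_div_le_one_div_of_le (Real.sqrt_pos.mpr hpos) hsq
  have hsum : (G.edgeFinset.card : ℝ) * (1/((n:ℝ)-1))
      ≤ ∑ e ∈ G.edgeFinset,
        Sym2.lift ⟨fun u v => 1 / Real.sqrt ((G.degree u : ℝ) * (G.degree v : ℝ)),
          fun u v => by simp [mul_comm]⟩ e := by
    have := Finset.card_nsmul_le_sum G.edgeFinset _ _ hterm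
    rwa [nsmul_eq_mul] at this
  have hcard : (n:ℝ) * (G.minDegree : ℝ) ≤ 2 * (G.edgeFinset.card : ℝ) := by
    have h1 : n * G.minDegree ≤ 2 * G.edgeFinset.card := by
      calc n * G.minDegree = Finset.univ.card • G.minDegree := by
            rw [Finset.card_univ, Fintype.card_fin, smul_eq_mul]
        _ ≤ ∑ v : Fin n, G.degree v :=
            Finset.card_nsmul_le_sum _ _ _ (fun v _ => G.minDegree_le_degree v)
        _ = 2 * G.edgeFinset.card := G.sum_degrees_eq_twice_card_edges
    exact_mod_cast h1
  refine le_trans ?_ hsum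
  rw [div_le_iff₀ (by linarith)]
  have e2 : (G.edgeFinset.card : ℝ) * (1/((n:ℝ)-1)) * (2 * ((n:ℝ) - 1))
      = 2 * (G.edgeFinset.card : ℝ) := by
    have h1 : (n:ℝ) - 1 ≠ 0 := by linarith
    field_simp
  rw [e2]; exact hcard

private lemma algConn_lb (hn : 3 ≤ n) (G : SimpleGraph (Fin n)) :
    letI : DecidableRel G.Adj := Classical.decRel _
    (2*(G.minDegree : ℝ) - n + 2 ≤ algebraicConnectivity G) ∧
      0 ≤ algebraicConnectivity G := by
  letI : DecidableRel G.Adj := Classical.decRel _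
  unfold algebraicConnectivity
  have h01 : (⟨0, by omega⟩ : Fin n) ≠ ⟨1, by omega⟩ := by
    intro h; simpa using congrArg Fin.val h
  set x₀ : Fin n → ℝ := fun i => (if i = ⟨0, by omega⟩ then (1:ℝ) else 0)
    + (if i = ⟨1, by omega⟩ then (-1:ℝ) else 0) with hx₀
  have hx₀ne : x₀ ≠ 0 := by
    intro h
    have h2 : x₀ ⟨0, by omega⟩ = 0 := by rw [h]; rfl
    rw [hx₀] at h2
    simp [h01] at h2
  have hx₀sum : ∑ i, x₀ i = 0 := by
    rw [hx₀]
    rw [Finset.sum_add_distrib, Finset.sum_ite_eq' Finset.univ, Finset.sum_ite_eq' Finset.univ]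
    simp
  have hne : {r : ℝ | ∃ x : Fin n → ℝ, x ≠ 0 ∧ (∑ i, x i) = 0 ∧
      r = (x ⬝ᵥ ((G.lapMatrix ℝ).mulVec x)) / (x ⬝ᵥ x)}.Nonempty :=
    ⟨_, x₀, hx₀ne, hx₀sum, rfl⟩
  have hbound : ∀ r ∈ {r : ℝ | ∃ x : Fin n → ℝ, x ≠ 0 ∧ (∑ i, x i) = 0 ∧
      r = (x ⬝ᵥ ((G.lapMatrix ℝ).mulVec x)) / (x ⬝ᵥ x)},
      (2*(G.minDegree : ℝ) - n + 2) ≤ r ∧ 0 ≤ r := by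
    rintro r ⟨x, hx, hsum, rfl⟩
    have hdot : x ⬝ᵥ x = ∑ i, (x i)^2 := by
      simp [dotProduct, sq]
    have hxpos : 0 < x ⬝ᵥ x := by
      rw [hdot]
      obtain ⟨i, hi⟩ := Function.ne_iff.mp hx
      exact Finset.sum_pos' (fun j _ => sq_nonneg _)
        ⟨i, Finset.mem_univ i, lt_of_le_of_ne (sq_nonneg _) (Ne.symm (pow_ne_zero 2 hi))⟩
    have hq := quad_lb hn G x hsum
    rw [← hdot] at hq
    have h0 : 0 ≤ x ⬝ᵥ ((G.lapMatrix ℝ).mulVec x) := by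
      have h := (SimpleGraph.posSemidef_lapMatrix ℝ G).dotProduct_mulVec_nonneg x
      rwa [star_trivial] at h
    constructor
    · rw [le_div_iff₀ hxpos]
      exact hq
    · exact div_nonneg h0 hxpos.le
  constructor
  · exact le_csInf hne fun r hr => (hbound r hr).1
  · exact le_csInf hne fun r hr => (hbound r hr).2
end Aux2

theorem randic_mul_algConn_ge_of_minDegree
    {n : ℕ} (hn : 3 ≤ n) (G : SimpleGraph (Fin n)) [DecidableRel G.Adj] (hG : G.Connected) :
    randicIndex G * algebraicConnectivity G ≥
      (n : ℝ) * (G.minDegree : ℝ) * (2 * (G.minDegree : ℝ) - (n : ℝ) + 2) /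
        (2 * ((n : ℝ) - 1)) := by
  rename_i inst
  have hi : inst = Classical.decRel _ := Subsingleton.elim _ _
  subst hi
  letI : DecidableRel G.Adj := Classical.decRel _
  have hR : (n:ℝ) * (G.minDegree : ℝ) / (2 * ((n:ℝ) - 1)) ≤ randicIndex G := randic_lb hn G
  obtain ⟨hA1, hA2⟩ : (2*(G.minDegree : ℝ) - n + 2 ≤ algebraicConnectivity G) ∧
      0 ≤ algebraicConnectivity G := algConn_lb hn G
  have hn3 : (3:ℝ) ≤ (n:ℝ) := by exact_mod_cast hn
  set δ : ℝ := (G.minDegree : ℝ) with hδ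
  have hδ0 : 0 ≤ δ := Nat.cast_nonneg _
  have hR0 : 0 ≤ randicIndex G :=
    le_trans (div_nonneg (by positivity) (by linarith)) hR
  rw [ge_iff_le]
  by_cases hc : 2*δ - (n:ℝ) + 2 ≤ 0
  · calc (n:ℝ) * δ * (2*δ - n + 2) / (2 * ((n:ℝ) - 1))
        ≤ 0 := div_nonpos_iff.mpr (Or.inr ⟨mul_nonpos_of_nonneg_of_nonpos (by positivity) hc,
            by linarith⟩)
      _ ≤ randicIndex G * algebraicConnectivity G := mul_nonneg hR0 hA2
  · push_neg at hc
    have key : ((n:ℝ) * δ / (2 * ((n:ℝ) - 1))) * (2*δ - n + 2)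
        ≤ randicIndex G * algebraicConnectivity G :=
      mul_le_mul hR hA1 (le_of_lt hc) hR0
    have e : (n:ℝ) * δ * (2*δ - n + 2) / (2 * ((n:ℝ) - 1))
        = ((n:ℝ) * δ / (2 * ((n:ℝ) - 1))) * (2*δ - n + 2) := by ring
    rw [e]; exact key
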